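/- For ξ ∈ ℝ and n ≥ 2, let M₁(ξ) be the n×n symmetric matrix with (1,1) entry ξ and all other entries 1/((i + j − 1)(i + j)). Then the unique real root ξ₀ of the equation det M₁(ξ₀) = 0 equals 1/3 for n = 2, 5/12 for n = 3, 9/20 for n = 4, 7/15 for n = 5, 10/21 for n = 6, and 27/56 for n = 7. -/

import Mathlib

open Matrix

/-- `M₁(ξ)` is the `n×n` matrix whose `(1,1)` entry is `ξ` and whose other entries are
`1/((i+j−1)(i+j))`. -/
noncomputable def M1 (n : ℕ) (ξ : ℝ) : Matrix (Fin n) (Fin n) ℝ :=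
  Matrix.of fun i j : Fin n =>
    if i.val = 0 ∧ j.val = 0 then ξ
    else (1 : ℝ) / (((i.val + j.val + 1 : ℕ) : ℝ) * ((i.val + j.val + 2 : ℕ) : ℝ))

/-- Linearity of the determinant in the `(0,0)` entry. -/
private lemma M1_det_linear (n : ℕ) (r ξ : ℝ) :
    (M1 (n+1) ξ).det = (M1 (n+1) r).det +
      (ξ - r) * ((M1 (n+1) r).submatrix Fin.succ Fin.succ).det := by
  have h1 : M1 (n+1) ξ =
      (M1 (n+1) r).updateRow 0
        ((M1 (n+1) r) 0 + (ξ - r) • (Pi.single (0 : Fin (n+1)) 1 : Fin (n+1) → ℝ)) := by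
    ext i j
    rcases Fin.eq_zero_or_eq_succ i with hi | ⟨i', rfl⟩
    · subst hi
      rcases Fin.eq_zero_or_eq_succ j with hj | ⟨j', rfl⟩
      · subst hj; simp [M1, Matrix.updateRow_apply]
      · simp [M1, Matrix.updateRow_apply, Pi.single_apply, (Fin.succ_ne_zero j').symm,
          Fin.succ_ne_zero]
    · simp [M1, Matrix.updateRow_apply, Fin.succ_ne_zero]
  rw [h1, Matrix.det_updateRow_add, Matrix.det_updateRow_smul, Matrix.updateRow_eq_self]
  congr 1
  have h2 : ((M1 (n+1) r).updateRow 0 (Pi.single 0 1)).submatrix Fin.succ Fin.succ =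
      (M1 (n+1) r).submatrix Fin.succ Fin.succ := by
    ext i j
    simp [Matrix.updateRow_apply, Fin.succ_ne_zero]
  rw [Matrix.det_succ_row_zero, Fin.sum_univ_succ]
  simp [Matrix.updateRow_apply, Pi.single_apply, Fin.succ_ne_zero, (Fin.succ_ne_zero · |>.symm),
    h2]

private lemma root_2 : (M1 2 (1/3 : ℝ)).det = 0 := by
  rw [← Matrix.exists_mulVec_eq_zero_iff]
  refine ⟨![(-1 : ℝ), (2 : ℝ)], fun h => by simpa using congrFun h 0, ?_⟩
  funext i
  fin_cases i <;>
    norm_num [M1, Matrix.mulVec, dotProduct, Fin.sum_univ_succ]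

private lemma minor_2 (r : ℝ) :
    (M1 2 r).submatrix Fin.succ Fin.succ = !![(1/12 : ℝ)] := by
  ext i j
  fin_cases i <;> fin_cases j <;> norm_num [M1] <;> intro h <;> exact absurd h (by decide)

set_option maxRecDepth 8000 in
private lemma Bdet_2 : (!![(1/12 : ℝ)] : Matrix (Fin 1) (Fin 1) ℝ).det ≠ 0 := by
  apply Matrix.det_ne_zero_of_right_inverse (B := !![(12 : ℝ)])
  ext i j
  fin_cases i <;> fin_cases j <;>
    norm_num [Matrix.mul_apply, Fin.sum_univ_succ, Matrix.one_apply, Fin.ext_iff]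

set_option maxRecDepth 8000 in
private lemma iff_2 (ξ : ℝ) : (M1 2 ξ).det = 0 ↔ ξ = 1 / 3 := by
  rw [M1_det_linear 1 (1/3) ξ, root_2, zero_add,
    mul_eq_zero, sub_eq_zero, minor_2]
  have hB := Bdet_2
  tauto

private lemma root_3 : (M1 3 (5/12 : ℝ)).det = 0 := by
  rw [← Matrix.exists_mulVec_eq_zero_iff]
  refine ⟨![(1 : ℝ), (-5 : ℝ), (5 : ℝ)], fun h => by simpa using congrFun h 0, ?_⟩
  funext i
  fin_cases i <;>
    norm_num [M1, Matrix.mulVec, dotProduct, Fin.sum_univ_succ]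

private lemma minor_3 (r : ℝ) :
    (M1 3 r).submatrix Fin.succ Fin.succ = !![(1/12 : ℝ), (1/20 : ℝ); (1/20 : ℝ), (1/30 : ℝ)] := by
  ext i j
  fin_cases i <;> fin_cases j <;> norm_num [M1] <;> intro h <;> exact absurd h (by decide)

set_option maxRecDepth 8000 in
private lemma Bdet_3 : (!![(1/12 : ℝ), (1/20 : ℝ); (1/20 : ℝ), (1/30 : ℝ)] : Matrix (Fin 2) (Fin 2) ℝ).det ≠ 0 := by
  apply Matrix.det_ne_zero_of_right_inverse (B := !![(120 : ℝ), (-180 : ℝ); (-180 : ℝ), (300 : ℝ)])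
  ext i j
  fin_cases i <;> fin_cases j <;>
    norm_num [Matrix.mul_apply, Fin.sum_univ_succ, Matrix.one_apply, Fin.ext_iff]

set_option maxRecDepth 8000 in
private lemma iff_3 (ξ : ℝ) : (M1 3 ξ).det = 0 ↔ ξ = 5 / 12 := by
  rw [M1_det_linear 2 (5/12) ξ, root_3, zero_add,
    mul_eq_zero, sub_eq_zero, minor_3]
  have hB := Bdet_3
  tauto

private lemma root_4 : (M1 4 (9/20 : ℝ)).det = 0 := by
  rw [← Matrix.exists_mulVec_eq_zero_iff]
  refine ⟨![(-1 : ℝ), (9 : ℝ), (-21 : ℝ), (14 : ℝ)], fun h => by simpa using congrFun h 0, ?_⟩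
  funext i
  fin_cases i <;>
    norm_num [M1, Matrix.mulVec, dotProduct, Fin.sum_univ_succ]

private lemma minor_4 (r : ℝ) :
    (M1 4 r).submatrix Fin.succ Fin.succ = !![(1/12 : ℝ), (1/20 : ℝ), (1/30 : ℝ); (1/20 : ℝ), (1/30 : ℝ), (1/42 : ℝ); (1/30 : ℝ), (1/42 : ℝ), (1/56 : ℝ)] := by
  ext i j
  fin_cases i <;> fin_cases j <;> norm_num [M1] <;> intro h <;> exact absurd h (by decide)

set_option maxRecDepth 8000 in
private lemma Bdet_4 : (!![(1/12 : ℝ), (1/20 : ℝ), (1/30 : ℝ); (1/20 : ℝ), (1/30 : ℝ), (1/42 : ℝ); (1/30 : ℝ), (1/42 : ℝ), (1/56 : ℝ)] : Matrix (Fin 3) (Fin 3) ℝ).det ≠ 0 := by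
  apply Matrix.det_ne_zero_of_right_inverse (B := !![(600 : ℝ), (-2100 : ℝ), (1680 : ℝ); (-2100 : ℝ), (7980 : ℝ), (-6720 : ℝ); (1680 : ℝ), (-6720 : ℝ), (5880 : ℝ)])
  ext i j
  fin_cases i <;> fin_cases j <;>
    norm_num [Matrix.mul_apply, Fin.sum_univ_succ, Matrix.one_apply, Fin.ext_iff]

set_option maxRecDepth 8000 in
private lemma iff_4 (ξ : ℝ) : (M1 4 ξ).det = 0 ↔ ξ = 9 / 20 := by
  rw [M1_det_linear 3 (9/20) ξ, root_4, zero_add,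
    mul_eq_zero, sub_eq_zero, minor_4]
  have hB := Bdet_4
  tauto

private lemma root_5 : (M1 5 (7/15 : ℝ)).det = 0 := by
  rw [← Matrix.exists_mulVec_eq_zero_iff]
  refine ⟨![(1 : ℝ), (-14 : ℝ), (56 : ℝ), (-84 : ℝ), (42 : ℝ)], fun h => by simpa using congrFun h 0, ?_⟩
  funext i
  fin_cases i <;>
    norm_num [M1, Matrix.mulVec, dotProduct, Fin.sum_univ_succ]

private lemma minor_5 (r : ℝ) :
    (M1 5 r).submatrix Fin.succ Fin.succ = !![(1/12 : ℝ), (1/20 : ℝ), (1/30 : ℝ), (1/42 : ℝ); (1/20 : ℝ), (1/30 : ℝ), (1/42 : ℝ), (1/56 : ℝ); (1/30 : ℝ), (1/42 : ℝ), (1/56 : ℝ), (1/72 : ℝ); (1/42 : ℝ), (1/56 : ℝ), (1/72 : ℝ), (1/90 : ℝ)] := by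
  ext i j
  fin_cases i <;> fin_cases j <;> norm_num [M1] <;> intro h <;> exact absurd h (by decide)

set_option maxRecDepth 8000 in
private lemma Bdet_5 : (!![(1/12 : ℝ), (1/20 : ℝ), (1/30 : ℝ), (1/42 : ℝ); (1/20 : ℝ), (1/30 : ℝ), (1/42 : ℝ), (1/56 : ℝ); (1/30 : ℝ), (1/42 : ℝ), (1/56 : ℝ), (1/72 : ℝ); (1/42 : ℝ), (1/56 : ℝ), (1/72 : ℝ), (1/90 : ℝ)] : Matrix (Fin 4) (Fin 4) ℝ).det ≠ 0 := by
  apply Matrix.det_ne_zero_of_right_inverse (B := !![(2100 : ℝ), (-12600 : ℝ), (22680 : ℝ), (-12600 : ℝ); (-12600 : ℝ), (81480 : ℝ), (-153720 : ℝ), (88200 : ℝ); (22680 : ℝ), (-153720 : ℝ), (299880 : ℝ), (-176400 : ℝ); (-12600 : ℝ), (88200 : ℝ), (-176400 : ℝ), (105840 : ℝ)])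
  ext i j
  fin_cases i <;> fin_cases j <;>
    norm_num [Matrix.mul_apply, Fin.sum_univ_succ, Matrix.one_apply, Fin.ext_iff]

set_option maxRecDepth 8000 in
private lemma iff_5 (ξ : ℝ) : (M1 5 ξ).det = 0 ↔ ξ = 7 / 15 := by
  rw [M1_det_linear 4 (7/15) ξ, root_5, zero_add,
    mul_eq_zero, sub_eq_zero, minor_5]
  have hB := Bdet_5
  tauto

private lemma root_6 : (M1 6 (10/21 : ℝ)).det = 0 := by
  rw [← Matrix.exists_mulVec_eq_zero_iff]
  refine ⟨![(-1 : ℝ), (20 : ℝ), (-120 : ℝ), (300 : ℝ), (-330 : ℝ), (132 : ℝ)], fun h => by simpa using congrFun h 0, ?_⟩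
  funext i
  fin_cases i <;>
    norm_num [M1, Matrix.mulVec, dotProduct, Fin.sum_univ_succ]

private lemma minor_6 (r : ℝ) :
    (M1 6 r).submatrix Fin.succ Fin.succ = !![(1/12 : ℝ), (1/20 : ℝ), (1/30 : ℝ), (1/42 : ℝ), (1/56 : ℝ); (1/20 : ℝ), (1/30 : ℝ), (1/42 : ℝ), (1/56 : ℝ), (1/72 : ℝ); (1/30 : ℝ), (1/42 : ℝ), (1/56 : ℝ), (1/72 : ℝ), (1/90 : ℝ); (1/42 : ℝ), (1/56 : ℝ), (1/72 : ℝ), (1/90 : ℝ), (1/110 : ℝ); (1/56 : ℝ), (1/72 : ℝ), (1/90 : ℝ), (1/110 : ℝ), (1/132 : ℝ)] := by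
  ext i j
  fin_cases i <;> fin_cases j <;> norm_num [M1] <;> intro h <;> exact absurd h (by decide)

set_option maxRecDepth 8000 in
private lemma Bdet_6 : (!![(1/12 : ℝ), (1/20 : ℝ), (1/30 : ℝ), (1/42 : ℝ), (1/56 : ℝ); (1/20 : ℝ), (1/30 : ℝ), (1/42 : ℝ), (1/56 : ℝ), (1/72 : ℝ); (1/30 : ℝ), (1/42 : ℝ), (1/56 : ℝ), (1/72 : ℝ), (1/90 : ℝ); (1/42 : ℝ), (1/56 : ℝ), (1/72 : ℝ), (1/90 : ℝ), (1/110 : ℝ); (1/56 : ℝ), (1/72 : ℝ), (1/90 : ℝ), (1/110 : ℝ), (1/132 : ℝ)] : Matrix (Fin 5) (Fin 5) ℝ).det ≠ 0 := by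
  apply Matrix.det_ne_zero_of_right_inverse (B := !![(5880 : ℝ), (-52920 : ℝ), (158760 : ℝ), (-194040 : ℝ), (83160 : ℝ); (-52920 : ℝ), (511560 : ℝ), (-1605240 : ℝ), (2023560 : ℝ), (-887040 : ℝ); (158760 : ℝ), (-1605240 : ℝ), (5198760 : ℝ), (-6708240 : ℝ), (2993760 : ℝ); (-194040 : ℝ), (2023560 : ℝ), (-6708240 : ℝ), (8814960 : ℝ), (-3991680 : ℝ); (83160 : ℝ), (-887040 : ℝ), (2993760 : ℝ), (-3991680 : ℝ), (1829520 : ℝ)])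
  ext i j
  fin_cases i <;> fin_cases j <;>
    norm_num [Matrix.mul_apply, Fin.sum_univ_succ, Matrix.one_apply, Fin.ext_iff]

set_option maxRecDepth 8000 in
private lemma iff_6 (ξ : ℝ) : (M1 6 ξ).det = 0 ↔ ξ = 10 / 21 := by
  rw [M1_det_linear 5 (10/21) ξ, root_6, zero_add,
    mul_eq_zero, sub_eq_zero, minor_6]
  have hB := Bdet_6
  tauto

private lemma root_7 : (M1 7 (27/56 : ℝ)).det = 0 := by
  rw [← Matrix.exists_mulVec_eq_zero_iff]
  refine ⟨![(1 : ℝ), (-27 : ℝ), (225 : ℝ), (-825 : ℝ), (1485 : ℝ), (-1287 : ℝ), (429 : ℝ)], fun h => by simpa using congrFun h 0, ?_⟩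
  funext i
  fin_cases i <;>
    norm_num [M1, Matrix.mulVec, dotProduct, Fin.sum_univ_succ]

private lemma minor_7 (r : ℝ) :
    (M1 7 r).submatrix Fin.succ Fin.succ = !![(1/12 : ℝ), (1/20 : ℝ), (1/30 : ℝ), (1/42 : ℝ), (1/56 : ℝ), (1/72 : ℝ); (1/20 : ℝ), (1/30 : ℝ), (1/42 : ℝ), (1/56 : ℝ), (1/72 : ℝ), (1/90 : ℝ); (1/30 : ℝ), (1/42 : ℝ), (1/56 : ℝ), (1/72 : ℝ), (1/90 : ℝ), (1/110 : ℝ); (1/42 : ℝ), (1/56 : ℝ), (1/72 : ℝ), (1/90 : ℝ), (1/110 : ℝ), (1/132 : ℝ); (1/56 : ℝ), (1/72 : ℝ), (1/90 : ℝ), (1/110 : ℝ), (1/132 : ℝ), (1/156 : ℝ); (1/72 : ℝ), (1/90 : ℝ), (1/110 : ℝ), (1/132 : ℝ), (1/156 : ℝ), (1/182 : ℝ)] := by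
  ext i j
  fin_cases i <;> fin_cases j <;> norm_num [M1] <;> intro h <;> exact absurd h (by decide)

set_option maxRecDepth 8000 in
private lemma Bdet_7 : (!![(1/12 : ℝ), (1/20 : ℝ), (1/30 : ℝ), (1/42 : ℝ), (1/56 : ℝ), (1/72 : ℝ); (1/20 : ℝ), (1/30 : ℝ), (1/42 : ℝ), (1/56 : ℝ), (1/72 : ℝ), (1/90 : ℝ); (1/30 : ℝ), (1/42 : ℝ), (1/56 : ℝ), (1/72 : ℝ), (1/90 : ℝ), (1/110 : ℝ); (1/42 : ℝ), (1/56 : ℝ), (1/72 : ℝ), (1/90 : ℝ), (1/110 : ℝ), (1/132 : ℝ); (1/56 : ℝ), (1/72 : ℝ), (1/90 : ℝ), (1/110 : ℝ), (1/132 : ℝ), (1/156 : ℝ); (1/72 : ℝ), (1/90 : ℝ), (1/110 : ℝ), (1/132 : ℝ), (1/156 : ℝ), (1/182 : ℝ)] : Matrix (Fin 6) (Fin 6) ℝ).det ≠ 0 := by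
  apply Matrix.det_ne_zero_of_right_inverse (B := !![(14112 : ℝ), (-176400 : ℝ), (776160 : ℝ), (-1552320 : ℝ), (1441440 : ℝ), (-504504 : ℝ); (-176400 : ℝ), (2363760 : ℝ), (-10866240 : ℝ), (22397760 : ℝ), (-21261240 : ℝ), (7567560 : ℝ); (776160 : ℝ), (-10866240 : ℝ), (51503760 : ℝ), (-108579240 : ℝ), (104864760 : ℝ), (-37837800 : ℝ); (-1552320 : ℝ), (22397760 : ℝ), (-108579240 : ℝ), (232931160 : ℝ), (-228107880 : ℝ), (83243160 : ℝ); (1441440 : ℝ), (-21261240 : ℝ), (104864760 : ℝ), (-228107880 : ℝ), (225945720 : ℝ), (-83243160 : ℝ); (-504504 : ℝ), (7567560 : ℝ), (-37837800 : ℝ), (83243160 : ℝ), (-83243160 : ℝ), (30918888 : ℝ)])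
  ext i j
  fin_cases i <;> fin_cases j <;>
    norm_num [Matrix.mul_apply, Fin.sum_univ_succ, Matrix.one_apply, Fin.ext_iff]

set_option maxRecDepth 8000 in
private lemma iff_7 (ξ : ℝ) : (M1 7 ξ).det = 0 ↔ ξ = 27 / 56 := by
  rw [M1_det_linear 6 (27/56) ξ, root_7, zero_add,
    mul_eq_zero, sub_eq_zero, minor_7]
  have hB := Bdet_7
  tauto

/-- The unique real root `ξ₀` of `det M₁(ξ₀) = 0` equals `1/3` for `n = 2`, `5/12` for
`n = 3`, `9/20` for `n = 4`, `7/15` for `n = 5`, `10/21` for `n = 6`, and `27/56`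
for `n = 7`. -/
theorem stmt11 :
    (∀ ξ : ℝ, (M1 2 ξ).det = 0 ↔ ξ = 1 / 3) ∧
    (∀ ξ : ℝ, (M1 3 ξ).det = 0 ↔ ξ = 5 / 12) ∧
    (∀ ξ : ℝ, (M1 4 ξ).det = 0 ↔ ξ = 9 / 20) ∧
    (∀ ξ : ℝ, (M1 5 ξ).det = 0 ↔ ξ = 7 / 15) ∧
    (∀ ξ : ℝ, (M1 6 ξ).det = 0 ↔ ξ = 10 / 21) ∧
    (∀ ξ : ℝ, (M1 7 ξ).det = 0 ↔ ξ = 27 / 56) := by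
  exact ⟨iff_2, iff_3, iff_4, iff_5, iff_6, iff_7⟩
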